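/- Let k ≥ 1 be a real number and let G be a finite simple C_4-free graph with average degree d(G) ≥ k. Then the independence number of G satisfies α(G) ≥ (k−1)²/(k+2); in particular, α(G) ≥ k − 4. -/

import Mathlib

open SimpleGraph Finset

/-- The average degree of a graph: `2 e(G) / |V(G)|`. -/
noncomputable def avgDeg {V : Type*} (G : SimpleGraph V) : ℝ :=
  2 * (G.edgeSet.ncard : ℝ) / (Nat.card V : ℝ)

/-- The maximum degree of a graph on a finite vertex type. -/
noncomputable def maxDeg {V : Type*} [Fintype V] (G : SimpleGraph V) : ℕ :=
  Finset.univ.sup fun v => (G.neighborSet v).ncard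

/-- `G` contains no (not necessarily induced) copy of the complete bipartite graph `K_{s,s}`. -/
def KssFree {V : Type*} (G : SimpleGraph V) (s : ℕ) : Prop :=
  ¬ ∃ S T : Finset V, Disjoint S T ∧ S.card = s ∧ T.card = s ∧
      ∀ a ∈ S, ∀ b ∈ T, G.Adj a b

/-- `G` contains no (not necessarily induced) copy of the four-cycle `C₄`:
no two distinct vertices have two distinct common neighbours. -/
def C4Free {V : Type*} (G : SimpleGraph V) : Prop :=
  ¬ ∃ a b c d : V, a ≠ b ∧ c ≠ d ∧ G.Adj a c ∧ G.Adj b c ∧ G.Adj a d ∧ G.Adj b d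

/-- `G` contains no triangle. -/
def C3Free {V : Type*} (G : SimpleGraph V) : Prop :=
  ¬ ∃ a b c : V, G.Adj a b ∧ G.Adj b c ∧ G.Adj a c

/-- `G` is bipartite: the vertex set can be split into two independent sets. -/
def IsBipartite {V : Type*} (G : SimpleGraph V) : Prop :=
  ∃ f : V → Bool, ∀ ⦃a b : V⦄, G.Adj a b → f a ≠ f b

/-- `G` is `d`-degenerate: every nonempty (induced) subgraph has a vertex of degree at most `d`. -/
def IsDegenerate {V : Type*} (G : SimpleGraph V) (d : ℝ) : Prop :=
  ∀ S : Finset V, S.Nonempty → ∃ v ∈ S, ((G.neighborSet v ∩ ↑S).ncard : ℝ) ≤ d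

/-- The number of edges of `G` with one endpoint in `A` and one in `B`. -/
noncomputable def eBetween {V : Type*} (G : SimpleGraph V) (A B : Set V) : ℕ :=
  {e : Sym2 V | e ∈ G.edgeSet ∧ ∃ a ∈ A, ∃ b ∈ B, e = s(a, b)}.ncard
lemma caroWei {V : Type} [Fintype V] [DecidableEq V] (G : SimpleGraph V)
    [DecidableRel G.Adj] (S : Finset V) :
    ∃ I : Finset V, I ⊆ S ∧ (∀ a ∈ I, ∀ b ∈ I, ¬ G.Adj a b) ∧
      ∑ v ∈ S, (1 : ℝ) / (((G.neighborFinset v ∩ S).card : ℝ) + 1) ≤ (I.card : ℝ) := by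
  induction S using Finset.strongInduction with
  | _ S ih =>
    rcases S.eq_empty_or_nonempty with rfl | hS
    · exact ⟨∅, by simp⟩
    · obtain ⟨v, hvS, hvmin⟩ :=
        S.exists_min_image (fun u => (G.neighborFinset u ∩ S).card) hS
      set A : Finset V := insert v (G.neighborFinset v) with hA
      have hvA : v ∈ A := mem_insert_self _ _
      have hss : S \ A ⊂ S :=
        ⟨sdiff_subset, fun h => (mem_sdiff.mp (h hvS)).2 hvA⟩
      obtain ⟨I', hI'sub, hI'ind, hI'sum⟩ := ih (S \ A) hss
      have hvI' : v ∉ I' := fun h => (mem_sdiff.mp (hI'sub h)).2 hvA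
      have hnadj : ∀ u ∈ I', ¬ G.Adj v u := by
        intro u hu hadj
        exact (mem_sdiff.mp (hI'sub hu)).2
          (mem_insert_of_mem ((G.mem_neighborFinset v u).mpr hadj))
      refine ⟨insert v I', ?_, ?_, ?_⟩
      · intro x hx
        rcases mem_insert.mp hx with rfl | hx
        · exact hvS
        · exact sdiff_subset (hI'sub hx)
      · intro a ha b hb hadj
        rcases mem_insert.mp ha with e1 | h1
        · rcases mem_insert.mp hb with e2 | h2
          · rw [e1, e2] at hadj; exact G.irrefl hadj
          · rw [e1] at hadj; exact hnadj b h2 hadj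
        · rcases mem_insert.mp hb with e2 | h2
          · rw [e2] at hadj; exact hnadj a h1 hadj.symm
          · exact hI'ind a h1 b h2 hadj
      · -- the sum bound
        have hsplit : ∑ u ∈ S, (1 : ℝ) / (((G.neighborFinset u ∩ S).card : ℝ) + 1)
            = (∑ u ∈ S.filter (· ∈ A), (1 : ℝ) / (((G.neighborFinset u ∩ S).card : ℝ) + 1))
              + ∑ u ∈ S \ A, (1 : ℝ) / (((G.neighborFinset u ∩ S).card : ℝ) + 1) := by
          rw [Finset.sdiff_eq_filter]
          exact (Finset.sum_filter_add_sum_filter_not S (· ∈ A) _).symm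
        have hpos : ∀ u : V, (0:ℝ) < ((G.neighborFinset u ∩ S).card : ℝ) + 1 := by
          intro u; positivity
        have hcard1 : (S.filter (· ∈ A)).card ≤ (G.neighborFinset v ∩ S).card + 1 := by
          have hsub : S.filter (· ∈ A) ⊆ insert v (G.neighborFinset v ∩ S) := by
            intro u hu
            obtain ⟨huS, huA⟩ := mem_filter.mp hu
            rcases mem_insert.mp huA with rfl | hu'
            · exact mem_insert_self _ _
            · exact mem_insert_of_mem (mem_inter.mpr ⟨hu', huS⟩)
          calc (S.filter (· ∈ A)).card ≤ _ := Finset.card_le_card hsub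
            _ ≤ (G.neighborFinset v ∩ S).card + 1 := Finset.card_insert_le _ _
        have h1 : ∑ u ∈ S.filter (· ∈ A), (1 : ℝ) / (((G.neighborFinset u ∩ S).card : ℝ) + 1)
            ≤ 1 := by
          have hterm : ∀ u ∈ S.filter (· ∈ A),
              (1 : ℝ) / (((G.neighborFinset u ∩ S).card : ℝ) + 1)
              ≤ 1 / (((G.neighborFinset v ∩ S).card : ℝ) + 1) := by
            intro u hu
            apply one_div_le_one_div_of_le (hpos v)
            have hc := (Nat.cast_le (α := ℝ)).mpr (hvmin u (mem_filter.mp hu).1)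
            linarith
          calc ∑ u ∈ S.filter (· ∈ A), (1 : ℝ) / (((G.neighborFinset u ∩ S).card : ℝ) + 1)
              ≤ ∑ _u ∈ S.filter (· ∈ A), (1:ℝ) / (((G.neighborFinset v ∩ S).card : ℝ) + 1) :=
                Finset.sum_le_sum hterm
            _ = ((S.filter (· ∈ A)).card : ℝ) / (((G.neighborFinset v ∩ S).card : ℝ) + 1) := by
                rw [Finset.sum_const]; ring
            _ ≤ 1 := by
                rw [div_le_one (hpos v)]
                have hc := (Nat.cast_le (α := ℝ)).mpr hcard1
                push_cast at hc ⊢; linarith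
        have h2 : ∑ u ∈ S \ A, (1 : ℝ) / (((G.neighborFinset u ∩ S).card : ℝ) + 1)
            ≤ (I'.card : ℝ) := by
          refine le_trans (Finset.sum_le_sum ?_) hI'sum
          intro u hu
          apply one_div_le_one_div_of_le
          · positivity
          · have hsub : G.neighborFinset u ∩ (S \ A) ⊆ G.neighborFinset u ∩ S :=
              inter_subset_inter (le_refl _) sdiff_subset
            have hc := (Nat.cast_le (α := ℝ)).mpr (Finset.card_le_card hsub)
            linarith
        rw [hsplit, Finset.card_insert_of_notMem hvI']
        push_cast
        linarith

lemma c4count {V : Type} [Fintype V] [DecidableEq V] (G : SimpleGraph V)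
    [DecidableRel G.Adj] (hC4 : C4Free G) :
    ∑ v : V, (((G.degree v : ℝ))^2 - (G.degree v : ℝ))
      ≤ (Fintype.card V : ℝ)^2 - (Fintype.card V : ℝ) := by
  classical
  set T : Finset (V × V × V) :=
    Finset.univ.filter fun p => p.1 ≠ p.2.1 ∧ G.Adj p.2.2 p.1 ∧ G.Adj p.2.2 p.2.1 with hT
  have h1 : T.card = ∑ v : V, (G.neighborFinset v).offDiag.card := by
    rw [Finset.card_eq_sum_card_fiberwise (f := fun p => p.2.2) (t := Finset.univ)
      (fun _ _ => mem_univ _)]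
    refine Finset.sum_congr rfl fun v _ => ?_
    refine Finset.card_bij (fun p _ => (p.1, p.2.1)) ?_ ?_ ?_
    · intro p hp
      rw [Finset.mem_filter] at hp
      obtain ⟨hpT, hv⟩ := hp
      rw [hT, Finset.mem_filter] at hpT
      obtain ⟨-, hne, ha, hb⟩ := hpT
      subst hv
      exact Finset.mem_offDiag.mpr ⟨(G.mem_neighborFinset _ _).mpr ha,
        (G.mem_neighborFinset _ _).mpr hb, hne⟩
    · intro p hp q hq h
      rw [Finset.mem_filter] at hp hq
      simp only [Prod.mk.injEq] at h
      obtain ⟨e1, e2⟩ := h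
      exact Prod.ext e1 (Prod.ext e2 (hp.2.trans hq.2.symm))
    · intro q hq
      obtain ⟨ha, hb, hne⟩ := Finset.mem_offDiag.mp hq
      refine ⟨(q.1, q.2, v), ?_, rfl⟩
      rw [Finset.mem_filter, hT, Finset.mem_filter]
      exact ⟨⟨mem_univ _, hne, (G.mem_neighborFinset _ _).mp ha,
        (G.mem_neighborFinset _ _).mp hb⟩, rfl⟩
  have h2 : T.card ≤ (Finset.univ : Finset V).offDiag.card := by
    apply Finset.card_le_card_of_injOn (fun p => (p.1, p.2.1))
    · intro p hp
      rw [Finset.mem_coe, hT, Finset.mem_filter] at hp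
      exact Finset.mem_offDiag.mpr ⟨mem_univ _, mem_univ _, hp.2.1⟩
    · intro p hp q hq h
      rw [Finset.mem_coe, hT, Finset.mem_filter] at hp hq
      obtain ⟨-, hne, ha, hb⟩ := hp
      obtain ⟨-, hne', ha', hb'⟩ := hq
      simp only [Prod.mk.injEq] at h
      obtain ⟨e1, e2⟩ := h
      have hcd : p.2.2 = q.2.2 := by
        by_contra hne2
        refine hC4 ⟨p.1, p.2.1, p.2.2, q.2.2, hne, hne2, ha.symm, hb.symm, ?_, ?_⟩
        · rw [e1]; exact ha'.symm
        · rw [e2]; exact hb'.symm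
      exact Prod.ext e1 (Prod.ext e2 hcd)
  have hmm : ∀ m : ℕ, m ≤ m * m := by
    intro m; cases m with
    | zero => simp
    | succ n => exact Nat.le_mul_of_pos_left _ (Nat.succ_pos n)
  have key : ∑ v : V, ((G.neighborFinset v).card * (G.neighborFinset v).card
      - (G.neighborFinset v).card) ≤ Fintype.card V * Fintype.card V - Fintype.card V := by
    have h3 := h1 ▸ h2
    simpa only [Finset.offDiag_card, Finset.card_univ] using h3
  have kcast : ((∑ v : V, ((G.neighborFinset v).card * (G.neighborFinset v).card
      - (G.neighborFinset v).card) : ℕ) : ℝ)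
      ≤ ((Fintype.card V * Fintype.card V - Fintype.card V : ℕ) : ℝ) := Nat.cast_le.mpr key
  rw [Nat.cast_sub (hmm _), Nat.cast_sum] at kcast
  have hterm : ∀ v : V, (((G.neighborFinset v).card * (G.neighborFinset v).card
      - (G.neighborFinset v).card : ℕ) : ℝ)
      = ((G.degree v : ℝ))^2 - (G.degree v : ℝ) := by
    intro v
    rw [Nat.cast_sub (hmm _), G.card_neighborFinset_eq_degree]
    push_cast; ring
  rw [Finset.sum_congr rfl fun v _ => hterm v] at kcast
  push_cast at kcast ⊢
  linarith

set_option maxHeartbeats 1000000 in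
/-- Corollary 6.8: any `C₄`-free graph of average degree at least `k ≥ 1` has independence
number at least `(k-1)²/(k+2)`, and in particular at least `k - 4`. -/
theorem C4_free_large_independence_number (k : ℝ) (hk : 1 ≤ k)
    (V : Type) [Fintype V] (G : SimpleGraph V)
    (hC4 : C4Free G) (hdeg : k ≤ avgDeg G) :
    ∃ I : Finset V, (∀ a ∈ I, ∀ b ∈ I, ¬ G.Adj a b) ∧
      (k - 1) ^ 2 / (k + 2) ≤ (I.card : ℝ) ∧ k - 4 ≤ (I.card : ℝ) := by
  classical
  set D : ℝ := avgDeg G with hD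
  set n : ℕ := Fintype.card V with hn
  have hD1 : 1 ≤ D := le_trans hk hdeg
  have hncard : (Nat.card V : ℝ) = (n : ℝ) := by rw [Nat.card_eq_fintype_card, hn]
  have hnpos : 0 < (n : ℝ) := by
    rcases Nat.eq_zero_or_pos n with h0 | h0
    · exfalso
      have : D = 0 := by
        rw [hD, avgDeg, hncard, h0]
        simp
      linarith
    · exact_mod_cast h0
  have hedge : (G.edgeSet.ncard : ℝ) = (G.edgeFinset.card : ℝ) := by
    norm_cast
    rw [SimpleGraph.edgeFinset]
    exact Set.ncard_eq_toFinset_card' _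
  have hsumdeg : ∑ v : V, (G.degree v : ℝ) = (n : ℝ) * D := by
    have h := G.sum_degrees_eq_twice_card_edges
    have hcast : ∑ v : V, (G.degree v : ℝ) = 2 * (G.edgeFinset.card : ℝ) := by
      exact_mod_cast h
    have hD2 : D = 2 * (G.edgeFinset.card : ℝ) / (n : ℝ) := by
      rw [hD, avgDeg, hncard, hedge]
    rw [hcast, hD2]
    have hne : (n:ℝ) ≠ 0 := ne_of_gt hnpos
    field_simp
  -- Chebyshev / Cauchy-Schwarz : (∑ d)^2 ≤ n ∑ d²
  have hcheb : ((n:ℝ) * D)^2 ≤ (n:ℝ) * ∑ v : V, (G.degree v : ℝ)^2 := by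
    have := sq_sum_le_card_mul_sum_sq (s := (Finset.univ : Finset V))
      (f := fun v => (G.degree v : ℝ))
    rw [hsumdeg] at this
    simpa [hn] using this
  have hcount := c4count G hC4
  -- D² - D + 1 ≤ n
  have hnD : D^2 - D + 1 ≤ (n:ℝ) := by
    have h1 : (n:ℝ) * D^2 ≤ ∑ v : V, (G.degree v : ℝ)^2 := by
      rw [← mul_le_mul_iff_right₀ hnpos]
      calc (n:ℝ) * ((n:ℝ) * D^2) = ((n:ℝ) * D)^2 := by ring
        _ ≤ (n:ℝ) * ∑ v : V, (G.degree v : ℝ)^2 := hcheb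
    have h2 : ∑ v : V, ((G.degree v : ℝ)^2 - (G.degree v : ℝ))
        = (∑ v : V, (G.degree v : ℝ)^2) - ∑ v : V, (G.degree v : ℝ) :=
      Finset.sum_sub_distrib _ _
    rw [h2, hsumdeg, ← hn] at hcount
    have h3 : (n:ℝ) * D^2 - (n:ℝ) * D ≤ (n:ℝ)^2 - (n:ℝ) := by linarith
    have h4 : (n:ℝ) * (D^2 - D + 1) ≤ (n:ℝ) * (n:ℝ) := by ring_nf; ring_nf at h3; linarith
    have := (mul_le_mul_iff_right₀ hnpos).mp h4
    linarith
  -- Caro-Wei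
  obtain ⟨I, -, hind, hIsum⟩ := caroWei G (Finset.univ : Finset V)
  have hIsum' : ∑ v : V, (1:ℝ) / ((G.degree v : ℝ) + 1) ≤ (I.card : ℝ) := by
    refine le_trans (le_of_eq (Finset.sum_congr rfl fun v _ => ?_)) hIsum
    rw [Finset.inter_univ, G.card_neighborFinset_eq_degree]
  -- Cauchy-Schwarz for harmonic sum
  have hCS : ((n:ℝ))^2 ≤ (∑ v : V, ((G.degree v : ℝ) + 1))
      * ∑ v : V, (1:ℝ) / ((G.degree v : ℝ) + 1) := by
    have hpos : ∀ v : V, (0:ℝ) < (G.degree v : ℝ) + 1 := fun v => by positivity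
    have := Finset.sum_mul_sq_le_sq_mul_sq (Finset.univ : Finset V)
      (fun v => Real.sqrt ((G.degree v : ℝ) + 1))
      (fun v => 1 / Real.sqrt ((G.degree v : ℝ) + 1))
    have e1 : ∀ v : V, Real.sqrt ((G.degree v : ℝ) + 1)
        * (1 / Real.sqrt ((G.degree v : ℝ) + 1)) = 1 := by
      intro v
      have : Real.sqrt ((G.degree v : ℝ) + 1) ≠ 0 :=
        ne_of_gt (Real.sqrt_pos.mpr (hpos v))
      field_simp
    have e2 : ∀ v : V, (Real.sqrt ((G.degree v : ℝ) + 1))^2 = (G.degree v : ℝ) + 1 :=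
      fun v => Real.sq_sqrt (le_of_lt (hpos v))
    have e3 : ∀ v : V, (1 / Real.sqrt ((G.degree v : ℝ) + 1))^2
        = 1 / ((G.degree v : ℝ) + 1) := by
      intro v
      rw [div_pow, one_pow, e2 v]
    rw [Finset.sum_congr rfl fun v _ => e1 v, Finset.sum_congr rfl fun v _ => e2 v,
      Finset.sum_congr rfl fun v _ => e3 v] at this
    simpa [hn] using this
  have hsum1 : ∑ v : V, ((G.degree v : ℝ) + 1) = (n:ℝ) * (D + 1) := by
    rw [Finset.sum_add_distrib, hsumdeg]
    simp [hn]; ring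
  set c : ℝ := (I.card : ℝ) with hc
  have hc0 : 0 ≤ c := Nat.cast_nonneg _
  -- n ≤ (D+1) * c
  have hmain : (n:ℝ) ≤ (D + 1) * c := by
    have hH : ∑ v : V, (1:ℝ) / ((G.degree v : ℝ) + 1) ≤ c := hIsum'
    have h5 : ((n:ℝ))^2 ≤ (n:ℝ) * (D+1) * c := by
      calc ((n:ℝ))^2 ≤ (∑ v : V, ((G.degree v : ℝ) + 1))
          * ∑ v : V, (1:ℝ) / ((G.degree v : ℝ) + 1) := hCS
        _ ≤ (n:ℝ) * (D+1) * c := by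
            rw [hsum1]
            apply mul_le_mul_of_nonneg_left hH
            positivity
    nlinarith [hnpos]
  have hkey : D^2 - D + 1 ≤ (D + 1) * c := le_trans hnD hmain
  have hkD : k ≤ D := hdeg
  have hDpos : (0:ℝ) < D + 1 := by linarith
  have hmono : (k - 1)^2 * (D + 1) ≤ (D^2 - D + 1) * (k + 2) := by
    nlinarith [mul_nonneg (sub_nonneg.2 hk) (sub_nonneg.2 hkD),
      mul_nonneg (mul_nonneg (sub_nonneg.2 hk) (sub_nonneg.2 hk)) (sub_nonneg.2 hkD),
      mul_nonneg (sub_nonneg.2 hkD) (sub_nonneg.2 hkD), sq_nonneg (D - k), sq_nonneg (k - 1)]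
  have goal1 : (k - 1) ^ 2 / (k + 2) ≤ c := by
    rw [div_le_iff₀ (by linarith : (0:ℝ) < k + 2)]
    have h6 : (k - 1)^2 * (D + 1) ≤ (c * (k + 2)) * (D + 1) := by
      calc (k - 1)^2 * (D + 1) ≤ (D^2 - D + 1) * (k + 2) := hmono
        _ ≤ ((D + 1) * c) * (k + 2) := by nlinarith [hkey]
        _ = (c * (k + 2)) * (D + 1) := by ring
    exact (mul_le_mul_iff_left₀ hDpos).mp h6
  refine ⟨I, hind, goal1, ?_⟩
  have : k - 4 ≤ (k - 1) ^ 2 / (k + 2) := by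
    rw [le_div_iff₀ (by linarith : (0:ℝ) < k + 2)]
    nlinarith
  linarith
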